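/- Assume 𝕀 ≠ ∅. Then max{deg(u) : u ∈ S′∖S} ≤ max_{i∈𝕀} (δ₁(w_i) + δ₂(w_i) − deg(w_i)) − 2, and also max{deg(u) : u ∈ S′∖S} ≤ ⌊(1 − a₁/d)·max_{i∈𝕀} δ₁(w_i) + (a_{k−1}/d)·max_{i∈𝕀} δ₂(w_i)⌋ − 2 (floor of a rational number). -/

import Mathlib

namespace ProjMonomialCurve

/-- The numerical semigroup generated by `a 1, …, a k` (equivalently by `A₁ = {0,a 1,…,a k}`). -/
def S1 (k : ℕ) (a : ℕ → ℕ) : Set ℕ :=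
  {n | ∃ x : ℕ → ℕ, n = ∑ i ∈ Finset.Icc 1 k, x i * a i}

/-- The numerical semigroup generated by the nonzero elements `d - a i` (`0 ≤ i ≤ k-1`)
of `A₂`, where `d = a k`. -/
def S2 (k : ℕ) (a : ℕ → ℕ) : Set ℕ :=
  {n | ∃ x : ℕ → ℕ, n = ∑ i ∈ Finset.range k, x i * (a k - a i)}

/-- `δ₁ n`: least total number of summands over representations `n = ∑ xᵢ aᵢ`. -/
noncomputable def delta1 (k : ℕ) (a : ℕ → ℕ) (n : ℕ) : ℕ :=
  sInf {m | ∃ x : ℕ → ℕ, n = ∑ i ∈ Finset.Icc 1 k, x i * a i ∧ m = ∑ i ∈ Finset.Icc 1 k, x i}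

/-- `δ₂ n`: least total number of summands over representations of `n` by the
nonzero elements of `A₂`. -/
noncomputable def delta2 (k : ℕ) (a : ℕ → ℕ) (n : ℕ) : ℕ :=
  sInf {m | ∃ x : ℕ → ℕ,
    n = ∑ i ∈ Finset.range k, x i * (a k - a i) ∧ m = ∑ i ∈ Finset.range k, x i}

/-- `ω₁ i`: the least element of `S₍₁₎` congruent to `i` modulo `d = a k`. -/
noncomputable def omega1 (k : ℕ) (a : ℕ → ℕ) (i : ℕ) : ℕ :=
  sInf {n | n ∈ S1 k a ∧ n % a k = i % a k}

/-- `ω₂ i`: the least element of `S₍₂₎` congruent to `i` modulo `d = a k`. -/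
noncomputable def omega2 (k : ℕ) (a : ℕ → ℕ) (i : ℕ) : ℕ :=
  sInf {n | n ∈ S2 k a ∧ n % a k = i % a k}

/-- `w i = (ω₁(i), ω₂(d-i))`. -/
noncomputable def w (k : ℕ) (a : ℕ → ℕ) (i : ℕ) : ℕ × ℕ :=
  (omega1 k a i, omega2 k a (a k - i))

/-- `e h = (h, d - h)`. -/
def e (k : ℕ) (a : ℕ → ℕ) (h : ℕ) : ℕ × ℕ := (h, a k - h)

/-- The affine semigroup `S ⊆ ℕ²` generated by `e (a 0), …, e (a k)`. -/
def S (k : ℕ) (a : ℕ → ℕ) : Set (ℕ × ℕ) :=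
  {u | ∃ x : ℕ → ℕ, u = ∑ i ∈ Finset.range (k+1), x i • e k a (a i)}

/-- `S' = {u ∈ ℕ² | u + p•e₀ ∈ S and u + p•e_d ∈ S for some p ∈ ℕ}`. -/
def S' (k : ℕ) (a : ℕ → ℕ) : Set (ℕ × ℕ) :=
  {u | ∃ p : ℕ, u + p • e k a 0 ∈ S k a ∧ u + p • e k a (a k) ∈ S k a}

/-- `deg u = (u₁ + u₂)/d` for `u ∈ ℕ²`. -/
def deg (k : ℕ) (a : ℕ → ℕ) (u : ℕ × ℕ) : ℕ := (u.1 + u.2) / a k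

/-- The index set `𝕀`. -/
noncomputable def II (k : ℕ) (a : ℕ → ℕ) : Set ℕ :=
  {i | 1 ≤ i ∧ i ≤ a k - 1 ∧ (∀ j, 1 ≤ j → j ≤ k - 1 → i ≠ a j) ∧
    deg k a (w k a i) < delta1 k a (w k a i).1}

/-- `T = {u ∈ ℤ² | d ∣ u₁+u₂, u₁ ∉ S₍₁₎, u₂ ∉ S₍₂₎}`. -/
def T (k : ℕ) (a : ℕ → ℕ) : Set (ℤ × ℤ) :=
  {u | (a k : ℤ) ∣ u.1 + u.2 ∧ (∀ n ∈ S1 k a, (n : ℤ) ≠ u.1) ∧ (∀ n ∈ S2 k a, (n : ℤ) ≠ u.2)}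

/-- `deg` for integer points. -/
def degZ (k : ℕ) (a : ℕ → ℕ) (u : ℤ × ℤ) : ℤ := (u.1 + u.2) / (a k : ℤ)

/-- The Castelnuovo–Mumford regularity, expressed combinatorially:
`max({deg u + 1 : u ∈ S'∖S} ∪ {deg u + 2 : u ∈ T})`. -/
noncomputable def reg (k : ℕ) (a : ℕ → ℕ) : ℤ :=
  sSup ({z : ℤ | ∃ u ∈ S' k a \ S k a, z = (deg k a u : ℤ) + 1} ∪
        {z : ℤ | ∃ u ∈ T k a, z = degZ k a u + 2})

/-- Frobenius number of `S₍₁₎` (greatest integer not in it; `-1` if the semigroup is all of `ℕ`). -/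
noncomputable def F1 (k : ℕ) (a : ℕ → ℕ) : ℤ :=
  sSup {z : ℤ | ∀ n ∈ S1 k a, (n : ℤ) ≠ z}

/-- Frobenius number of `S₍₂₎`. -/
noncomputable def F2 (k : ℕ) (a : ℕ → ℕ) : ℤ :=
  sSup {z : ℤ | ∀ n ∈ S2 k a, (n : ℤ) ≠ z}

/-- The largest gap `λ_max = max_{1 ≤ i ≤ k} (a i - a (i-1) - 1)`. -/
def lamMax (k : ℕ) (a : ℕ → ℕ) : ℕ :=
  (Finset.Icc 1 k).sup (fun i => a i - a (i-1) - 1)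

/-- The second largest gap: the minimum over `i` of the largest gap among indices `≠ i`. -/
noncomputable def lamSl (k : ℕ) (a : ℕ → ℕ) : ℕ :=
  sInf {m | ∃ i, 1 ≤ i ∧ i ≤ k ∧
    m = ((Finset.Icc 1 k).erase i).sup (fun j => a j - a (j-1) - 1)}

/-- The set `A₁ = {a 0, a 1, …, a k}`. -/
def A1set (k : ℕ) (a : ℕ → ℕ) : Set ℕ := {m | ∃ j ≤ k, a j = m}


section Aux
open Finset

private lemma sum_shift {M : Type*} [AddCommMonoid M] (k : ℕ) (f : ℕ → M) :
    ∑ i ∈ Finset.range (k+1), f i = f 0 + ∑ i ∈ Finset.Icc 1 k, f i := by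
  rw [Finset.range_eq_Ico, Finset.sum_eq_sum_Ico_succ_bot (Nat.succ_pos k)]
  congr 1

private lemma gcd_bezout (s : Finset ℕ) (b : ℕ → ℕ) :
    ∃ c : ℕ → ℤ, (↑(s.gcd b) : ℤ) = ∑ i ∈ s, c i * b i := by
  classical
  induction s using Finset.induction_on with
  | empty => exact ⟨0, by simp⟩
  | insert _ _ hi =>
    rename_i i s ih
    obtain ⟨c, hc⟩ := ih
    refine ⟨fun j => if j = i then Nat.gcdA (b i) (s.gcd b) else Nat.gcdB (b i) (s.gcd b) * c j, ?_⟩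
    rw [Finset.gcd_insert, Finset.sum_insert hi]
    have h2 : ∑ j ∈ s, (if j = i then (Nat.gcdA (b i) (s.gcd b)) else Nat.gcdB (b i) (s.gcd b) * c j) * (b j : ℤ)
        = Nat.gcdB (b i) (s.gcd b) * ∑ j ∈ s, c j * (b j : ℤ) := by
      rw [Finset.mul_sum]
      refine Finset.sum_congr rfl (fun j hj => ?_)
      rw [if_neg (by rintro rfl; exact hi hj)]
      ring
    beta_reduce
    rw [if_pos rfl, h2, ← hc]
    show ((Nat.gcd (b i) (s.gcd b) : ℕ) : ℤ) = _
    have h3 := Nat.gcd_eq_gcd_ab (b i) (s.gcd b)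
    push_cast
    linarith [h3]

private lemma a_mono {k : ℕ} {a : ℕ → ℕ} (hmono : ∀ i, i < k → a i < a (i+1)) :
    ∀ i j, i ≤ j → j ≤ k → a i ≤ a j := by
  intro i j hij hjk
  obtain ⟨n, rfl⟩ := Nat.exists_eq_add_of_le hij
  clear hij
  induction n with
  | zero => simp
  | succ n ih =>
    have h1 := hmono (i+n) (by omega)
    have h2 := ih (by omega)
    have h3 : i + (n+1) = (i+n)+1 := rfl
    rw [h3]
    omega


private lemma sum_parts {k : ℕ} {a : ℕ → ℕ} (hle : ∀ i ≤ k, a i ≤ a k) (x : ℕ → ℕ) :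
    ∑ i ∈ Finset.range (k+1), x i * a i + ∑ i ∈ Finset.range (k+1), x i * (a k - a i)
      = (∑ i ∈ Finset.range (k+1), x i) * a k := by
  rw [← Finset.sum_add_distrib, Finset.sum_mul]
  refine Finset.sum_congr rfl fun i hi => ?_
  have h : a i ≤ a k := hle i (Nat.lt_succ_iff.mp (Finset.mem_range.mp hi))
  rw [← Nat.mul_add, Nat.add_sub_cancel' h]

private lemma S_elim {k : ℕ} {a : ℕ → ℕ} (ha0 : a 0 = 0) (hle : ∀ i ≤ k, a i ≤ a k)
    (hd : 0 < a k) {u : ℕ × ℕ} (hu : u ∈ S k a) :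
    a k ∣ u.1 + u.2 ∧
      ∃ x : ℕ → ℕ, u.1 = ∑ i ∈ Finset.Icc 1 k, x i * a i ∧
        u.2 = ∑ i ∈ Finset.range k, x i * (a k - a i) ∧
        ∑ i ∈ Finset.Icc 1 k, x i ≤ deg k a u ∧
        ∑ i ∈ Finset.range k, x i ≤ deg k a u := by
  obtain ⟨x, hx⟩ := hu
  have h1 : u.1 = ∑ i ∈ Finset.range (k+1), x i * a i := by
    rw [hx, Prod.fst_sum]
    refine Finset.sum_congr rfl fun i _ => ?_
    simp [e, smul_eq_mul]
  have h2 : u.2 = ∑ i ∈ Finset.range (k+1), x i * (a k - a i) := by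
    rw [hx, Prod.snd_sum]
    refine Finset.sum_congr rfl fun i _ => ?_
    simp [e, smul_eq_mul]
  have hsum : u.1 + u.2 = (∑ i ∈ Finset.range (k+1), x i) * a k := by
    rw [h1, h2, sum_parts hle]
  have hdeg : deg k a u = ∑ i ∈ Finset.range (k+1), x i := by
    rw [deg, hsum, Nat.mul_div_cancel _ hd]
  refine ⟨⟨_, by rw [hsum, Nat.mul_comm]⟩, x, ?_, ?_, ?_, ?_⟩
  · rw [h1, sum_shift k (fun i => x i * a i), ha0]; simp
  · rw [h2, Finset.sum_range_succ]; simp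
  · rw [hdeg, sum_shift k x]; omega
  · rw [hdeg, Finset.sum_range_succ]; omega

private lemma S_intro1 {k : ℕ} {a : ℕ → ℕ} (ha0 : a 0 = 0) (hle : ∀ i ≤ k, a i ≤ a k)
    (hd : 0 < a k) {u : ℕ × ℕ} (hdvd : a k ∣ u.1 + u.2) (x : ℕ → ℕ)
    (h1 : u.1 = ∑ i ∈ Finset.Icc 1 k, x i * a i)
    (h2 : ∑ i ∈ Finset.Icc 1 k, x i ≤ deg k a u) : u ∈ S k a := by
  set N := deg k a u with hN
  set s := ∑ i ∈ Finset.Icc 1 k, x i with hs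
  have hNK : u.1 + u.2 = N * a k := by
    rw [hN, deg, Nat.div_mul_cancel hdvd]
  set y : ℕ → ℕ := fun i => if i = 0 then N - s else x i with hy
  have hy1 : ∑ i ∈ Finset.range (k+1), y i * a i = u.1 := by
    rw [sum_shift k (fun i => y i * a i), h1]
    have : ∑ i ∈ Finset.Icc 1 k, y i * a i = ∑ i ∈ Finset.Icc 1 k, x i * a i :=
      Finset.sum_congr rfl fun i hi => by
        have : i ≠ 0 := by have := Finset.mem_Icc.mp hi; omega
        simp [hy, this]
    rw [this, hy]; simp [ha0]
  have hyt : ∑ i ∈ Finset.range (k+1), y i = (N - s) + s := by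
    rw [sum_shift k y]
    have : ∑ i ∈ Finset.Icc 1 k, y i = s := by
      rw [hs]
      refine Finset.sum_congr rfl fun i hi => ?_
      have : i ≠ 0 := by have := Finset.mem_Icc.mp hi; omega
      simp [hy, this]
    rw [this]; simp [hy]
  have hparts := sum_parts hle y
  have hy2 : ∑ i ∈ Finset.range (k+1), y i * (a k - a i) = u.2 := by
    rw [hy1, hyt] at hparts
    have hns : (N - s) + s = N := by omega
    rw [hns] at hparts
    omega
  refine ⟨y, Prod.ext_iff.mpr ⟨?_, ?_⟩⟩
  · rw [Prod.fst_sum]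
    simp only [e, Prod.smul_mk, smul_eq_mul]
    exact hy1.symm
  · rw [Prod.snd_sum]
    simp only [e, Prod.smul_mk, smul_eq_mul]
    exact hy2.symm

private lemma S_intro2 {k : ℕ} {a : ℕ → ℕ} (hle : ∀ i ≤ k, a i ≤ a k)
    (hd : 0 < a k) {u : ℕ × ℕ} (hdvd : a k ∣ u.1 + u.2) (x : ℕ → ℕ)
    (h1 : u.2 = ∑ i ∈ Finset.range k, x i * (a k - a i))
    (h2 : ∑ i ∈ Finset.range k, x i ≤ deg k a u) : u ∈ S k a := by
  set N := deg k a u with hN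
  set s := ∑ i ∈ Finset.range k, x i with hs
  have hNK : u.1 + u.2 = N * a k := by
    rw [hN, deg, Nat.div_mul_cancel hdvd]
  set y : ℕ → ℕ := fun i => if i = k then N - s else x i with hy
  have hy2 : ∑ i ∈ Finset.range (k+1), y i * (a k - a i) = u.2 := by
    rw [Finset.sum_range_succ, h1]
    have : ∑ i ∈ Finset.range k, y i * (a k - a i)
        = ∑ i ∈ Finset.range k, x i * (a k - a i) :=
      Finset.sum_congr rfl fun i hi => by
        have : i ≠ k := by have := Finset.mem_range.mp hi; omega
        simp [hy, this]
    rw [this, hy]; simp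
  have hyt : ∑ i ∈ Finset.range (k+1), y i = s + (N - s) := by
    rw [Finset.sum_range_succ]
    have : ∑ i ∈ Finset.range k, y i = s := by
      rw [hs]
      refine Finset.sum_congr rfl fun i hi => ?_
      have : i ≠ k := by have := Finset.mem_range.mp hi; omega
      simp [hy, this]
    rw [this, hy]; simp
  have hparts := sum_parts hle y
  have hy1 : ∑ i ∈ Finset.range (k+1), y i * a i = u.1 := by
    rw [hy2, hyt] at hparts
    have hns : s + (N - s) = N := by omega
    rw [hns] at hparts
    omega
  refine ⟨y, Prod.ext_iff.mpr ⟨?_, ?_⟩⟩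
  · rw [Prod.fst_sum]
    simp only [e, Prod.smul_mk, smul_eq_mul]
    exact hy1.symm
  · rw [Prod.snd_sum]
    simp only [e, Prod.smul_mk, smul_eq_mul]
    exact hy2.symm


private lemma class_lemma (s : Finset ℕ) (b : ℕ → ℕ) (hgcd : s.gcd b = 1) (K : ℕ)
    (hK : 0 < K) (i : ℕ) :
    ∃ x : ℕ → ℕ, (∑ j ∈ s, x j * b j) % K = i % K := by
  obtain ⟨c, hc⟩ := gcd_bezout s b
  rw [hgcd] at hc
  push_cast at hc
  set x : ℕ → ℕ := fun j => (c j % (K : ℤ)).toNat with hx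
  have hmod : ((∑ j ∈ s, x j * b j : ℕ) : ZMod K) = 1 := by
    push_cast
    have : ∀ j ∈ s, ((x j : ZMod K)) * (b j : ZMod K) = (c j : ZMod K) * (b j : ZMod K) := by
      intro j hj
      congr 1
      have h1 : ((x j : ℕ) : ℤ) = c j % (K : ℤ) := by
        rw [hx]
        exact Int.toNat_of_nonneg (Int.emod_nonneg _ (by exact_mod_cast hK.ne'))
      calc ((x j : ℕ) : ZMod K) = (((x j : ℕ) : ℤ) : ZMod K) := by push_cast; ring
        _ = ((c j % (K:ℤ) : ℤ) : ZMod K) := by rw [h1]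
        _ = ((c j : ℤ) : ZMod K) := ZMod.intCast_mod (c j) K
    rw [Finset.sum_congr rfl this]
    have h4 := congrArg (fun z : ℤ => (z : ZMod K)) hc
    push_cast at h4
    linear_combination h4.symm
  refine ⟨fun j => i * x j, ?_⟩
  have : (∑ j ∈ s, (i * x j) * b j) = i * ∑ j ∈ s, x j * b j := by
    rw [Finset.mul_sum]
    exact Finset.sum_congr rfl fun j _ => by ring
  rw [this]
  have : ((i * ∑ j ∈ s, x j * b j : ℕ) : ZMod K) = ((i : ℕ) : ZMod K) := by
    push_cast [hmod]
    ring
  exact (ZMod.natCast_eq_natCast_iff' _ _ _).mp this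

private lemma S'_elim {k : ℕ} {a : ℕ → ℕ} (ha0 : a 0 = 0) (hle : ∀ i ≤ k, a i ≤ a k)
    (hd : 0 < a k) {u : ℕ × ℕ} (hu : u ∈ S' k a) :
    u.1 ∈ S1 k a ∧ u.2 ∈ S2 k a ∧ a k ∣ u.1 + u.2 := by
  obtain ⟨p, h0, hk'⟩ := hu
  have he0 : p • e k a 0 = (0, p * a k) := by simp [e, Prod.smul_mk, smul_eq_mul]
  have hed : p • e k a (a k) = (p * a k, 0) := by simp [e, Prod.smul_mk, smul_eq_mul]
  rw [he0] at h0
  rw [hed] at hk'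
  obtain ⟨hdvd0, x0, hx01, _, _, _⟩ := S_elim ha0 hle hd h0
  obtain ⟨_, xd, _, hxd2, _, _⟩ := S_elim ha0 hle hd hk'
  refine ⟨⟨x0, by simpa using hx01⟩, ⟨xd, by simpa using hxd2⟩, ?_⟩
  simp only [Prod.fst_add, Prod.snd_add] at hdvd0
  have h6 : u.1 + 0 + (u.2 + p * a k) = p * a k + (u.1 + u.2) := by ring
  rw [h6] at hdvd0
  exact (Nat.dvd_add_right (dvd_mul_left (a k) p)).mp hdvd0

private lemma notS_elim {k : ℕ} {a : ℕ → ℕ} (ha0 : a 0 = 0) (hle : ∀ i ≤ k, a i ≤ a k)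
    (hd : 0 < a k) {u : ℕ × ℕ} (hu1 : u.1 ∈ S1 k a) (hu2 : u.2 ∈ S2 k a)
    (hdvd : a k ∣ u.1 + u.2) (hu : u ∉ S k a) :
    deg k a u < delta1 k a u.1 ∧ deg k a u < delta2 k a u.2 := by
  constructor
  · by_contra h
    push_neg at h
    have hne : {m | ∃ x : ℕ → ℕ, u.1 = ∑ i ∈ Finset.Icc 1 k, x i * a i ∧
        m = ∑ i ∈ Finset.Icc 1 k, x i}.Nonempty := by
      obtain ⟨x, hx⟩ := hu1
      exact ⟨_, x, hx, rfl⟩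
    obtain ⟨x, hx, hm⟩ := Nat.sInf_mem hne
    exact hu (S_intro1 ha0 hle hd hdvd x hx (by rw [← hm]; exact h))
  · by_contra h
    push_neg at h
    have hne : {m | ∃ x : ℕ → ℕ, u.2 = ∑ i ∈ Finset.range k, x i * (a k - a i) ∧
        m = ∑ i ∈ Finset.range k, x i}.Nonempty := by
      obtain ⟨x, hx⟩ := hu2
      exact ⟨_, x, hx, rfl⟩
    obtain ⟨x, hx, hm⟩ := Nat.sInf_mem hne
    exact hu (S_intro2 hle hd hdvd x hx (by rw [← hm]; exact h))

private lemma delta1_rep {k : ℕ} {a : ℕ → ℕ} {n : ℕ} (hn : n ∈ S1 k a) :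
    ∃ x : ℕ → ℕ, n = ∑ i ∈ Finset.Icc 1 k, x i * a i ∧
      ∑ i ∈ Finset.Icc 1 k, x i = delta1 k a n := by
  have hne : {m | ∃ x : ℕ → ℕ, n = ∑ i ∈ Finset.Icc 1 k, x i * a i ∧
      m = ∑ i ∈ Finset.Icc 1 k, x i}.Nonempty := by
    obtain ⟨x, hx⟩ := hn
    exact ⟨_, x, hx, rfl⟩
  obtain ⟨x, hx, hm⟩ := Nat.sInf_mem hne
  exact ⟨x, hx, hm.symm⟩

private lemma delta2_rep {k : ℕ} {a : ℕ → ℕ} {n : ℕ} (hn : n ∈ S2 k a) :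
    ∃ x : ℕ → ℕ, n = ∑ i ∈ Finset.range k, x i * (a k - a i) ∧
      ∑ i ∈ Finset.range k, x i = delta2 k a n := by
  have hne : {m | ∃ x : ℕ → ℕ, n = ∑ i ∈ Finset.range k, x i * (a k - a i) ∧
      m = ∑ i ∈ Finset.range k, x i}.Nonempty := by
    obtain ⟨x, hx⟩ := hn
    exact ⟨_, x, hx, rfl⟩
  obtain ⟨x, hx, hm⟩ := Nat.sInf_mem hne
  exact ⟨x, hx, hm.symm⟩

private lemma delta1_le' {k : ℕ} {a : ℕ → ℕ} {n : ℕ} (x : ℕ → ℕ)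
    (hx : n = ∑ i ∈ Finset.Icc 1 k, x i * a i) :
    delta1 k a n ≤ ∑ i ∈ Finset.Icc 1 k, x i :=
  Nat.sInf_le ⟨x, hx, rfl⟩

private lemma delta2_le' {k : ℕ} {a : ℕ → ℕ} {n : ℕ} (x : ℕ → ℕ)
    (hx : n = ∑ i ∈ Finset.range k, x i * (a k - a i)) :
    delta2 k a n ≤ ∑ i ∈ Finset.range k, x i :=
  Nat.sInf_le ⟨x, hx, rfl⟩


private lemma key {k : ℕ} {a : ℕ → ℕ} (hk : 3 ≤ k) (ha0 : a 0 = 0)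
    (hmono : ∀ i, i < k → a i < a (i+1)) {u : ℕ × ℕ}
    (hu' : u ∈ S' k a) (hunotS : u ∉ S k a) :
    ∃ i ∈ II k a, ∃ q r : ℕ,
      deg k a u = deg k a (w k a i) + q + r ∧
      deg k a (w k a i) + r + 1 ≤ delta1 k a (w k a i).1 ∧
      deg k a (w k a i) + q + 1 ≤ delta2 k a (w k a i).2 ∧
      a 1 * delta1 k a (w k a i).1 + (a k - a (k-1)) * delta2 k a (w k a i).2
        ≤ a k * deg k a (w k a i) := by
  have hle : ∀ i ≤ k, a i ≤ a k := fun i hi => a_mono hmono i k hi le_rfl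
  have h01 : 0 < a 1 := by have h := hmono 0 (by omega); simpa [ha0] using h
  have hd : 0 < a k := by
    have := a_mono hmono 1 k (by omega) le_rfl; omega
  obtain ⟨h1, h2, hdvd⟩ := S'_elim ha0 hle hd hu'
  obtain ⟨hδ1u, hδ2u⟩ := notS_elim ha0 hle hd h1 h2 hdvd hunotS
  set N := deg k a u with hN
  have hNK : u.1 + u.2 = N * a k := by rw [hN, deg, Nat.div_mul_cancel hdvd]
  set ii := u.1 % a k with hii
  have hi_lt : ii < a k := Nat.mod_lt _ hd
  -- ii ≥ 1
  have hi1 : 1 ≤ ii := by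
    by_contra hcon
    push_neg at hcon
    have h0 : u.1 % a k = 0 := by omega
    obtain ⟨q, hq⟩ := Nat.dvd_of_mod_eq_zero h0
    rw [Nat.mul_comm] at hq
    have hrep : u.1 = ∑ j ∈ Finset.Icc 1 k, (if j = k then q else 0) * a j := by
      rw [Finset.sum_eq_single_of_mem k (Finset.mem_Icc.mpr ⟨by omega, le_rfl⟩)
        (fun j _ hj => by simp [hj]), if_pos rfl, hq]
    have hcount : ∑ j ∈ Finset.Icc 1 k, (if j = k then q else 0) = q := by
      rw [Finset.sum_eq_single_of_mem k (Finset.mem_Icc.mpr ⟨by omega, le_rfl⟩)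
        (fun j _ hj => by simp [hj]), if_pos rfl]
    have hd1 : delta1 k a u.1 ≤ q := by
      have := delta1_le' _ hrep
      omega
    have hqN : q * a k ≤ N * a k := by omega
    have : q ≤ N := Nat.le_of_mul_le_mul_right hqN hd
    omega
  -- omega1 facts
  have hset1 : {n | n ∈ S1 k a ∧ n % a k = ii % a k}.Nonempty :=
    ⟨u.1, h1, by simp [hii, Nat.mod_mod_of_dvd]⟩
  have homega1 := Nat.sInf_mem hset1
  rw [show sInf {n | n ∈ S1 k a ∧ n % a k = ii % a k} = omega1 k a ii from rfl] at homega1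
  have hw1le : omega1 k a ii ≤ u.1 := Nat.sInf_le ⟨h1, by simp [hii]⟩
  have hiimod : ii % a k = ii := Nat.mod_eq_of_lt hi_lt
  have hw1mod : omega1 k a ii % a k = ii := by rw [homega1.2, hiimod]
  obtain ⟨q, hq⟩ : ∃ q, u.1 = omega1 k a ii + q * a k := by
    have hmeq : omega1 k a ii ≡ u.1 [MOD a k] := by
      unfold Nat.ModEq
      rw [hw1mod, hii]
    obtain ⟨q, hq'⟩ := (Nat.modEq_iff_dvd' hw1le).mp hmeq
    rw [Nat.mul_comm] at hq'
    exact ⟨q, by omega⟩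
  -- u.2 mod
  have hu2mod : u.2 % a k = (a k - ii) % a k := by
    obtain ⟨m, hm⟩ := hdvd
    rw [Nat.mul_comm] at hm
    set t := u.1 / a k with ht
    have hdm : t * a k + ii = u.1 := by
      rw [ht, hii, Nat.mul_comm]
      exact Nat.div_add_mod u.1 (a k)
    have hmt : t + 1 ≤ m := by
      by_contra hcon
      push_neg at hcon
      have : m * a k ≤ t * a k := Nat.mul_le_mul_right _ (by omega)
      omega
    have e2 : (t + 1) * a k = t * a k + a k := by rw [Nat.add_mul, Nat.one_mul]
    have e3 : (t + 1) * a k ≤ m * a k := Nat.mul_le_mul_right _ hmt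
    have e1 : (m - t - 1) * a k = m * a k - t * a k - a k := by
      rw [Nat.sub_mul, Nat.sub_mul, Nat.one_mul]
    have hm2 : u.2 = (m - t - 1) * a k + (a k - ii) := by omega
    rw [hm2, Nat.add_comm, Nat.add_mul_mod_self_right]
  have hset2 : {n | n ∈ S2 k a ∧ n % a k = (a k - ii) % a k}.Nonempty :=
    ⟨u.2, h2, hu2mod⟩
  have homega2 := Nat.sInf_mem hset2
  rw [show sInf {n | n ∈ S2 k a ∧ n % a k = (a k - ii) % a k} = omega2 k a (a k - ii) from rfl]
    at homega2
  have hw2le : omega2 k a (a k - ii) ≤ u.2 := Nat.sInf_le ⟨h2, hu2mod⟩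
  have hkiimod : (a k - ii) % a k = a k - ii := Nat.mod_eq_of_lt (by omega)
  have hw2mod : omega2 k a (a k - ii) % a k = a k - ii := by rw [homega2.2, hkiimod]
  obtain ⟨r, hr⟩ : ∃ r, u.2 = omega2 k a (a k - ii) + r * a k := by
    have hmeq : omega2 k a (a k - ii) ≡ u.2 [MOD a k] := by
      unfold Nat.ModEq
      rw [hw2mod, hu2mod, hkiimod]
    obtain ⟨r, hr'⟩ := (Nat.modEq_iff_dvd' hw2le).mp hmeq
    rw [Nat.mul_comm] at hr'
    exact ⟨r, by omega⟩
  -- deg of w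
  set W1 := omega1 k a ii with hW1
  set W2 := omega2 k a (a k - ii) with hW2
  have hdvdw : a k ∣ W1 + W2 := by
    apply Nat.dvd_of_mod_eq_zero
    rw [Nat.add_mod, hw1mod, hw2mod, show ii + (a k - ii) = a k by omega, Nat.mod_self]
  have hwfst : (w k a ii).1 = W1 := rfl
  have hwsnd : (w k a ii).2 = W2 := rfl
  set D := deg k a (w k a ii) with hD
  have hdegwK : W1 + W2 = D * a k := by
    rw [hD, deg, hwfst, hwsnd, Nat.div_mul_cancel hdvdw]
  have hNdecomp : N = D + q + r := by
    have hNKeq : N * a k = (D + q + r) * a k := by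
      rw [Nat.add_mul, Nat.add_mul, ← hNK, hq, hr]
      omega
    exact Nat.eq_of_mul_eq_mul_right hd hNKeq
  -- delta1 bound
  obtain ⟨x, hx, hxc⟩ := delta1_rep homega1.1
  have hkmem : k ∈ Finset.Icc 1 k := Finset.mem_Icc.mpr ⟨by omega, le_rfl⟩
  have hδ1w : D + r + 1 ≤ delta1 k a W1 := by
    have hsplit : ∀ j ∈ Finset.Icc 1 k,
        (if j = k then x k + q else x j) * a j = x j * a j + (if j = k then q * a k else 0) := by
      intro j _
      by_cases hjk : j = k
      · subst hjk; simp [Nat.add_mul]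
      · simp [hjk]
    have hite : ∑ j ∈ Finset.Icc 1 k, (if j = k then q * a k else 0) = q * a k := by
      rw [Finset.sum_eq_single_of_mem k hkmem (fun j _ hj => by simp [hj]), if_pos rfl]
    have hrep : u.1 = ∑ j ∈ Finset.Icc 1 k, (if j = k then x k + q else x j) * a j := by
      rw [Finset.sum_congr rfl hsplit, Finset.sum_add_distrib, hite, ← hx, hq]
    have hsplit2 : ∀ j ∈ Finset.Icc 1 k,
        (if j = k then x k + q else x j) = x j + (if j = k then q else 0) := by
      intro j _
      by_cases hjk : j = k
      · subst hjk; simp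
      · simp [hjk]
    have hite2 : ∑ j ∈ Finset.Icc 1 k, (if j = k then q else 0) = q := by
      rw [Finset.sum_eq_single_of_mem k hkmem (fun j _ hj => by simp [hj]), if_pos rfl]
    have hcount : ∑ j ∈ Finset.Icc 1 k, (if j = k then x k + q else x j)
        = delta1 k a W1 + q := by
      rw [Finset.sum_congr rfl hsplit2, Finset.sum_add_distrib, hite2, hxc]
    have hle1 : delta1 k a u.1 ≤ delta1 k a W1 + q := by
      have := delta1_le' _ hrep
      omega
    omega
  -- delta2 bound
  obtain ⟨x2, hx2, hx2c⟩ := delta2_rep homega2.1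
  have h0mem : (0 : ℕ) ∈ Finset.range k := Finset.mem_range.mpr (by omega)
  have hδ2w : D + q + 1 ≤ delta2 k a W2 := by
    have hsplit : ∀ j ∈ Finset.range k,
        (if j = 0 then x2 0 + r else x2 j) * (a k - a j)
          = x2 j * (a k - a j) + (if j = 0 then r * a k else 0) := by
      intro j _
      by_cases hjk : j = 0
      · subst hjk; simp [ha0, Nat.add_mul]
      · simp [hjk]
    have hite : ∑ j ∈ Finset.range k, (if j = 0 then r * a k else 0) = r * a k := by
      rw [Finset.sum_eq_single_of_mem 0 h0mem (fun j _ hj => by simp [hj]), if_pos rfl]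
    have hrep : u.2 = ∑ j ∈ Finset.range k, (if j = 0 then x2 0 + r else x2 j) * (a k - a j) := by
      rw [Finset.sum_congr rfl hsplit, Finset.sum_add_distrib, hite, ← hx2, hr]
    have hsplit2 : ∀ j ∈ Finset.range k,
        (if j = 0 then x2 0 + r else x2 j) = x2 j + (if j = 0 then r else 0) := by
      intro j _
      by_cases hjk : j = 0
      · subst hjk; simp
      · simp [hjk]
    have hite2 : ∑ j ∈ Finset.range k, (if j = 0 then r else 0) = r := by
      rw [Finset.sum_eq_single_of_mem 0 h0mem (fun j _ hj => by simp [hj]), if_pos rfl]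
    have hcount : ∑ j ∈ Finset.range k, (if j = 0 then x2 0 + r else x2 j)
        = delta2 k a W2 + r := by
      rw [Finset.sum_congr rfl hsplit2, Finset.sum_add_distrib, hite2, hx2c]
    have hle2 : delta2 k a u.2 ≤ delta2 k a W2 + r := by
      have := delta2_le' _ hrep
      omega
    omega
  -- D ≥ 1
  have hW1pos : 1 ≤ W1 := by
    rcases Nat.eq_zero_or_pos W1 with h | h
    · rw [h] at hw1mod; simp at hw1mod; omega
    · omega
  have hDpos : 1 ≤ D := by
    rcases Nat.eq_zero_or_pos D with h | h
    · rw [h] at hdegwK; simp at hdegwK; omega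
    · omega
  -- II membership
  have hII : ii ∈ II k a := by
    refine ⟨hi1, by omega, ?_, ?_⟩
    · intro j hj1 hj2 heq
      have hajk : a j < a k := by
        have h1' := a_mono hmono j (k-1) hj2 (by omega)
        have h2' := hmono (k-1) (by omega)
        have : k - 1 + 1 = k := by omega
        rw [this] at h2'
        omega
      have haj1 : 1 ≤ a j := by
        have := a_mono hmono 1 j hj1 (by omega)
        omega
      have hjmem : j ∈ Finset.Icc 1 k := Finset.mem_Icc.mpr ⟨hj1, by omega⟩
      have hajS1 : a j ∈ S1 k a := by
        refine ⟨fun l => if l = j then 1 else 0, ?_⟩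
        rw [Finset.sum_eq_single_of_mem j hjmem (fun l _ hl => by simp [hl])]
        simp
      have hw1le_aj : W1 ≤ a j := Nat.sInf_le ⟨hajS1, by
        rw [Nat.mod_eq_of_lt hajk, hiimod, heq]⟩
      have hW1eq : W1 = a j := by
        have : W1 % a k = W1 := Nat.mod_eq_of_lt (by omega)
        omega
      have hd1le : delta1 k a W1 ≤ 1 := by
        have hrep : W1 = ∑ l ∈ Finset.Icc 1 k, (if l = j then 1 else 0) * a l := by
          rw [Finset.sum_eq_single_of_mem j hjmem (fun l _ hl => by simp [hl])]
          simp [hW1eq]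
        have hcnt : ∑ l ∈ Finset.Icc 1 k, (if l = j then 1 else 0) = 1 := by
          rw [Finset.sum_eq_single_of_mem j hjmem (fun l _ hl => by simp [hl]), if_pos rfl]
        have := delta1_le' _ hrep
        omega
      omega
    · have hfst : (w k a ii).1 = W1 := rfl
      rw [hfst, ← hD]
      omega
  refine ⟨ii, hII, q, r, hNdecomp, ?_, ?_, ?_⟩
  · rw [hwfst]; exact hδ1w
  · rw [hwsnd]; exact hδ2w
  · rw [hwfst, hwsnd]
    have hb1 : a 1 * delta1 k a W1 ≤ W1 := by
      refine le_trans ?_ (le_of_eq hx.symm)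
      calc a 1 * delta1 k a W1 = ∑ j ∈ Finset.Icc 1 k, x j * a 1 := by
            rw [← Finset.sum_mul, hxc]; ring
        _ ≤ ∑ j ∈ Finset.Icc 1 k, x j * a j := by
            refine Finset.sum_le_sum fun j hj => ?_
            have hj' := Finset.mem_Icc.mp hj
            exact Nat.mul_le_mul_left _ (a_mono hmono 1 j hj'.1 hj'.2)
    have hb2 : (a k - a (k-1)) * delta2 k a W2 ≤ W2 := by
      refine le_trans ?_ (le_of_eq hx2.symm)
      calc (a k - a (k-1)) * delta2 k a W2
            = ∑ j ∈ Finset.range k, x2 j * (a k - a (k-1)) := by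
            rw [← Finset.sum_mul, hx2c]; ring
        _ ≤ ∑ j ∈ Finset.range k, x2 j * (a k - a j) := by
            refine Finset.sum_le_sum fun j hj => ?_
            have hj' := Finset.mem_range.mp hj
            have : a j ≤ a (k-1) := a_mono hmono j (k-1) (by omega) (by omega)
            exact Nat.mul_le_mul_left _ (by omega)
    calc a 1 * delta1 k a W1 + (a k - a (k-1)) * delta2 k a W2 ≤ W1 + W2 := by omega
      _ = a k * D := by rw [hdegwK]; ring


private lemma S1_class {k : ℕ} {a : ℕ → ℕ} (hgcd : (Finset.Icc 1 k).gcd a = 1)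
    (hd : 0 < a k) (i : ℕ) : ∃ n ∈ S1 k a, n % a k = i % a k := by
  obtain ⟨x, hx⟩ := class_lemma (Finset.Icc 1 k) a hgcd (a k) hd i
  exact ⟨_, ⟨x, rfl⟩, hx⟩

private lemma S2_class {k : ℕ} {a : ℕ → ℕ} (hk : 3 ≤ k) (ha0 : a 0 = 0)
    (hle : ∀ i ≤ k, a i ≤ a k) (hgcd : (Finset.Icc 1 k).gcd a = 1)
    (hd : 0 < a k) (i : ℕ) : ∃ n ∈ S2 k a, n % a k = i % a k := by
  have hgcd2 : (Finset.range k).gcd (fun j => a k - a j) = 1 := by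
    set g := (Finset.range k).gcd (fun j => a k - a j) with hg
    have hgK : g ∣ a k := by
      have := Finset.gcd_dvd (f := fun j => a k - a j)
        (Finset.mem_range.mpr (show 0 < k by omega))
      simpa [ha0] using this
    have hga : ∀ j ∈ Finset.Icc 1 k, g ∣ a j := by
      intro j hj
      have hj' := Finset.mem_Icc.mp hj
      by_cases hjk : j = k
      · subst hjk; exact hgK
      · have hjlt : j < k := by omega
        have h1 : g ∣ a k - a j := Finset.gcd_dvd (Finset.mem_range.mpr hjlt)
        have h2 : a j = a k - (a k - a j) := by
          have := hle j (by omega); omega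
        rw [h2]
        exact Nat.dvd_sub hgK h1
    have := Finset.dvd_gcd hga
    rw [hgcd] at this
    exact Nat.dvd_one.mp this
  obtain ⟨x, hx⟩ := class_lemma (Finset.range k) (fun j => a k - a j) hgcd2 (a k) hd i
  exact ⟨_, ⟨x, rfl⟩, hx⟩

private lemma w_mem {k : ℕ} {a : ℕ → ℕ} (hk : 3 ≤ k) (ha0 : a 0 = 0)
    (hmono : ∀ i, i < k → a i < a (i+1)) (hgcd : (Finset.Icc 1 k).gcd a = 1)
    {i : ℕ} (hi : i ∈ II k a) : w k a i ∈ S' k a \ S k a := by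
  have hle : ∀ j ≤ k, a j ≤ a k := fun j hj => a_mono hmono j k hj le_rfl
  have hd : 0 < a k := by
    have h := hmono 0 (by omega)
    rw [ha0] at h
    have h2 := a_mono hmono (0+1) k (by omega) le_rfl
    omega
  obtain ⟨hi1, hile, _, hlt⟩ := hi
  have hilt : i < a k := by omega
  have hset1 : {n | n ∈ S1 k a ∧ n % a k = i % a k}.Nonempty := by
    obtain ⟨n, hn, hn2⟩ := S1_class hgcd hd i
    exact ⟨n, hn, hn2⟩
  have homega1 := Nat.sInf_mem hset1
  rw [show sInf {n | n ∈ S1 k a ∧ n % a k = i % a k} = omega1 k a i from rfl] at homega1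
  have hset2 : {n | n ∈ S2 k a ∧ n % a k = (a k - i) % a k}.Nonempty := by
    obtain ⟨n, hn, hn2⟩ := S2_class hk ha0 hle hgcd hd (a k - i)
    exact ⟨n, hn, hn2⟩
  have homega2 := Nat.sInf_mem hset2
  rw [show sInf {n | n ∈ S2 k a ∧ n % a k = (a k - i) % a k} = omega2 k a (a k - i) from rfl]
    at homega2
  set W1 := omega1 k a i with hW1
  set W2 := omega2 k a (a k - i) with hW2
  have hiimod : i % a k = i := Nat.mod_eq_of_lt hilt
  have hkiimod : (a k - i) % a k = a k - i := Nat.mod_eq_of_lt (by omega)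
  have hw1mod : W1 % a k = i := by rw [homega1.2, hiimod]
  have hw2mod : W2 % a k = a k - i := by rw [homega2.2, hkiimod]
  have hdvdw : a k ∣ W1 + W2 := by
    apply Nat.dvd_of_mod_eq_zero
    rw [Nat.add_mod, hw1mod, hw2mod, show i + (a k - i) = a k by omega, Nat.mod_self]
  have hwfst : (w k a i).1 = W1 := rfl
  have hwsnd : (w k a i).2 = W2 := rfl
  set D := deg k a (w k a i) with hD
  have hdegwK : W1 + W2 = D * a k := by
    rw [hD, deg, hwfst, hwsnd, Nat.div_mul_cancel hdvdw]
  constructor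
  · set p := delta1 k a W1 + delta2 k a W2 with hp
    refine ⟨p, ?_, ?_⟩
    · have he0 : p • e k a 0 = (0, p * a k) := by simp [e, Prod.smul_mk, smul_eq_mul]
      rw [he0]
      set v : ℕ × ℕ := w k a i + (0, p * a k) with hv
      have hv1 : v.1 = W1 := by rw [hv, Prod.fst_add, hwfst]; simp
      have hv2 : v.2 = W2 + p * a k := by rw [hv, Prod.snd_add, hwsnd]
      have hvdvd : a k ∣ v.1 + v.2 := by
        rw [hv1, hv2, show W1 + (W2 + p * a k) = (W1 + W2) + p * a k by ring]
        exact Dvd.dvd.add hdvdw (Dvd.intro_left p rfl)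
      have hvdeg : deg k a v = D + p := by
        rw [deg, hv1, hv2, show W1 + (W2 + p * a k) = (W1 + W2) + p * a k by ring,
          hdegwK, ← Nat.add_mul, Nat.mul_div_cancel _ hd]
      obtain ⟨x, hx, hxc⟩ := delta1_rep homega1.1
      refine S_intro1 ha0 hle hd hvdvd x (by rw [hv1, hx]) ?_
      rw [hvdeg, hxc]
      omega
    · have hed : p • e k a (a k) = (p * a k, 0) := by simp [e, Prod.smul_mk, smul_eq_mul]
      rw [hed]
      set v : ℕ × ℕ := w k a i + (p * a k, 0) with hv
      have hv1 : v.1 = W1 + p * a k := by rw [hv, Prod.fst_add, hwfst]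
      have hv2 : v.2 = W2 := by rw [hv, Prod.snd_add, hwsnd]; simp
      have hvdvd : a k ∣ v.1 + v.2 := by
        rw [hv1, hv2, show W1 + p * a k + W2 = (W1 + W2) + p * a k by ring]
        exact Dvd.dvd.add hdvdw (Dvd.intro_left p rfl)
      have hvdeg : deg k a v = D + p := by
        rw [deg, hv1, hv2, show W1 + p * a k + W2 = (W1 + W2) + p * a k by ring,
          hdegwK, ← Nat.add_mul, Nat.mul_div_cancel _ hd]
      obtain ⟨x, hx, hxc⟩ := delta2_rep homega2.1
      refine S_intro2 hle hd hvdvd x (by rw [hv2, hx]) ?_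
      rw [hvdeg, hxc]
      omega
  · intro hS
    obtain ⟨_, x, hx1, _, hxc, _⟩ := S_elim ha0 hle hd hS
    have h1 : delta1 k a (w k a i).1 ≤ deg k a (w k a i) :=
      le_trans (delta1_le' x hx1) hxc
    omega

end Aux

theorem statement_12 (k : ℕ) (a : ℕ → ℕ) (hk : 3 ≤ k) (ha0 : a 0 = 0)
    (hmono : ∀ i, i < k → a i < a (i+1)) (hgcd : (Finset.Icc 1 k).gcd a = 1)
    (hne : (II k a).Nonempty) :
    (sSup {m | ∃ u ∈ S' k a \ S k a, m = deg k a u} ≤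
      sSup {m | ∃ i ∈ II k a,
        m = delta1 k a (w k a i).1 + delta2 k a (w k a i).2 - deg k a (w k a i)} - 2) ∧
    ((sSup {m | ∃ u ∈ S' k a \ S k a, m = deg k a u} : ℤ) ≤
      ⌊(1 - (a 1 : ℚ) / (a k : ℚ)) *
          ((sSup {m | ∃ i ∈ II k a, m = delta1 k a (w k a i).1} : ℕ) : ℚ) +
        ((a (k-1) : ℚ) / (a k : ℚ)) *
          ((sSup {m | ∃ i ∈ II k a, m = delta2 k a (w k a i).2} : ℕ) : ℚ)⌋ - 2) := by
  have hle : ∀ j ≤ k, a j ≤ a k := fun j hj => a_mono hmono j k hj le_rfl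
  have h01 : 0 < a 1 := by have h := hmono 0 (by omega); simpa [ha0] using h
  have hd : 0 < a k := by
    have h2 := a_mono hmono 1 k (by omega) le_rfl
    omega
  set L := {m | ∃ u ∈ S' k a \ S k a, m = deg k a u} with hL
  set R := {m | ∃ i ∈ II k a,
      m = delta1 k a (w k a i).1 + delta2 k a (w k a i).2 - deg k a (w k a i)} with hR
  set R1 := {m | ∃ i ∈ II k a, m = delta1 k a (w k a i).1} with hR1
  set R2 := {m | ∃ i ∈ II k a, m = delta2 k a (w k a i).2} with hR2
  have hIIsub : II k a ⊆ Set.Icc 1 (a k) := fun i hi => ⟨hi.1, by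
    have := hi.2.1; omega⟩
  have hbdd : ∀ f : ℕ → ℕ, BddAbove {m | ∃ i ∈ II k a, m = f i} := by
    intro f
    have hsub : {m | ∃ i ∈ II k a, m = f i} ⊆ f '' (Set.Icc 1 (a k)) := by
      rintro m ⟨i, hi, rfl⟩
      exact ⟨i, hIIsub hi, rfl⟩
    exact (((Set.finite_Icc 1 (a k)).image f).subset hsub).bddAbove
  have hRbdd : BddAbove R := hbdd _
  have hR1bdd : BddAbove R1 := hbdd _
  have hR2bdd : BddAbove R2 := hbdd _
  obtain ⟨i0, hi0⟩ := hne
  have hw0 := w_mem hk ha0 hmono hgcd hi0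
  have hLne : L.Nonempty := ⟨deg k a (w k a i0), w k a i0, hw0, rfl⟩
  -- per-element bound
  have hper : ∀ m ∈ L, m + 2 ≤ sSup R := by
    rintro m ⟨u, hu, rfl⟩
    obtain ⟨hu', hunotS⟩ := hu
    obtain ⟨i, hiII, q, r, hdec, hd1, hd2, _⟩ := key hk ha0 hmono hu' hunotS
    have helt : delta1 k a (w k a i).1 + delta2 k a (w k a i).2 - deg k a (w k a i) ∈ R :=
      ⟨i, hiII, rfl⟩
    have := le_csSup hRbdd helt
    omega
  have part1 : sSup L ≤ sSup R - 2 := by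
    refine csSup_le hLne fun m hm => ?_
    have := hper m hm
    omega
  refine ⟨part1, ?_⟩
  have hk1le : a (k-1) ≤ a k := hle (k-1) (by omega)
  have ha1le : a 1 ≤ a k := hle 1 (by omega)
  have hKpos : (0:ℚ) < (a k : ℚ) := by exact_mod_cast hd
  have hbound : ∀ z ∈ {m : ℤ | ∃ u ∈ S' k a \ S k a, m = (deg k a u : ℤ)},
      z ≤ ⌊(1 - (a 1 : ℚ) / (a k : ℚ)) * ((sSup R1 : ℕ) : ℚ)
          + ((a (k-1) : ℚ) / (a k : ℚ)) * ((sSup R2 : ℕ) : ℚ)⌋ - 2 := by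
    rintro z ⟨u, ⟨hu', hunotS⟩, rfl⟩
    obtain ⟨i, hiII, q, r, hdec, hdd1, hdd2, hlin⟩ := key hk ha0 hmono hu' hunotS
    have hD1 : delta1 k a (w k a i).1 ≤ sSup R1 := le_csSup hR1bdd ⟨i, hiII, rfl⟩
    have hD2 : delta2 k a (w k a i).2 ≤ sSup R2 := le_csSup hR2bdd ⟨i, hiII, rfl⟩
    set d1 : ℚ := (delta1 k a (w k a i).1 : ℚ) with hd1q
    set d2 : ℚ := (delta2 k a (w k a i).2 : ℚ) with hd2q
    set Dw : ℚ := (deg k a (w k a i) : ℚ) with hDwq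
    have f1 : Dw + r + 1 ≤ d1 := by rw [hDwq, hd1q]; exact_mod_cast hdd1
    have f2 : Dw + q + 1 ≤ d2 := by rw [hDwq, hd2q]; exact_mod_cast hdd2
    have f3 : (a 1 : ℚ) * d1 + ((a k : ℚ) - (a (k-1) : ℚ)) * d2 ≤ (a k : ℚ) * Dw := by
      rw [hd1q, hd2q, hDwq,
        show ((a k : ℚ) - (a (k-1) : ℚ)) = ((a k - a (k-1) : ℕ) : ℚ) by
          push_cast [Nat.cast_sub hk1le]; ring]
      exact_mod_cast hlin
    have f4 : d1 ≤ ((sSup R1 : ℕ) : ℚ) := by rw [hd1q]; exact_mod_cast hD1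
    have f5 : d2 ≤ ((sSup R2 : ℕ) : ℚ) := by rw [hd2q]; exact_mod_cast hD2
    have f6 : (a 1 : ℚ) ≤ (a k : ℚ) := by exact_mod_cast ha1le
    have hNq : ((deg k a u : ℕ) : ℚ) = Dw + q + r := by
      rw [hdec, hDwq]; push_cast; ring
    have hchain : ((deg k a u : ℕ) : ℚ) + 2 ≤
        (1 - (a 1 : ℚ) / (a k : ℚ)) * ((sSup R1 : ℕ) : ℚ)
          + ((a (k-1) : ℚ) / (a k : ℚ)) * ((sSup R2 : ℕ) : ℚ) := by
      have expand : (1 - (a 1 : ℚ)/(a k : ℚ)) * d1 + ((a (k-1) : ℚ)/(a k : ℚ)) * d2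
          = d1 + d2 - ((a 1 : ℚ) * d1 + ((a k : ℚ) - (a (k-1) : ℚ)) * d2) / (a k : ℚ) := by
        field_simp
        ring
      have h3' : ((a 1 : ℚ) * d1 + ((a k : ℚ) - (a (k-1) : ℚ)) * d2) / (a k : ℚ) ≤ Dw := by
        rw [div_le_iff₀ hKpos]
        linarith [f3]
      have step1 : ((deg k a u : ℕ) : ℚ) + 2
          ≤ (1 - (a 1 : ℚ)/(a k : ℚ)) * d1 + ((a (k-1) : ℚ)/(a k : ℚ)) * d2 := by
        rw [expand, hNq]
        linarith [f1, f2, h3']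
      have hc1 : (0:ℚ) ≤ 1 - (a 1 : ℚ)/(a k : ℚ) := by
        have : (a 1 : ℚ)/(a k : ℚ) ≤ 1 := by rw [div_le_one hKpos]; exact f6
        linarith
      have hc2 : (0:ℚ) ≤ (a (k-1) : ℚ)/(a k : ℚ) := by positivity
      have s4 := mul_le_mul_of_nonneg_left f4 hc1
      have s5 := mul_le_mul_of_nonneg_left f5 hc2
      linarith
    have hfloor : ((deg k a u : ℕ) : ℤ) + 2 ≤
        ⌊(1 - (a 1 : ℚ) / (a k : ℚ)) * ((sSup R1 : ℕ) : ℚ)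
          + ((a (k-1) : ℚ) / (a k : ℚ)) * ((sSup R2 : ℕ) : ℚ)⌋ := by
      rw [Int.le_floor]
      push_cast
      exact_mod_cast hchain
    omega
  exact csSup_le ⟨_, w k a i0, hw0, rfl⟩ hbound

end ProjMonomialCurve
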